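/- For every n ≥ 1, k ≥ 1 and every continuous group homomorphism ρ : 𝕋ⁿ → U(k), the continuous map 𝕋ⁿ → SU(2k) given by a ↦ diag(ρ(a), conj ρ(a)) is null-homotopic, i.e. homotopic through continuous maps to the constant map with value the 2k×2k identity matrix. -/

import Mathlib

set_option maxHeartbeats 1000000


open Matrix

/-- If `A` is a unitary matrix then the block-diagonal matrix `diag(A, conj A)` (where
`conj A` is the entrywise complex conjugate) is special unitary. -/
theorem fromBlocks_conj_mem_specialUnitaryGroup {k : ℕ} (A : Matrix (Fin k) (Fin k) ℂ)
    (hA : A ∈ Matrix.unitaryGroup (Fin k) ℂ) :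
    Matrix.fromBlocks A 0 0 (A.map (starRingEnd ℂ)) ∈
      Matrix.specialUnitaryGroup (Fin k ⊕ Fin k) ℂ := by
  have hA' : A * Aᴴ = 1 := Matrix.mem_unitaryGroup_iff.mp hA
  have hmapH : (A.map (starRingEnd ℂ))ᴴ = Aᵀ := by
    ext i j; simp [Matrix.conjTranspose_apply, Matrix.map_apply]
  have hmap : A.map (starRingEnd ℂ) * (A.map (starRingEnd ℂ))ᴴ = 1 := by
    rw [hmapH]
    have h1 : (A * Aᴴ).map (starRingEnd ℂ) = (1 : Matrix (Fin k) (Fin k) ℂ) := by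
      rw [hA', Matrix.map_one _ (map_zero _) (map_one _)]
    have h2 : (A * Aᴴ).map (starRingEnd ℂ) = A.map (starRingEnd ℂ) * Aᴴ.map (starRingEnd ℂ) :=
      Matrix.map_mul
    have h3 : Aᴴ.map (starRingEnd ℂ) = Aᵀ := by
      ext i j; simp [Matrix.conjTranspose_apply, Matrix.map_apply]
    rw [h2, h3] at h1
    exact h1
  rw [Matrix.mem_specialUnitaryGroup_iff]
  refine ⟨?_, ?_⟩
  · rw [Matrix.mem_unitaryGroup_iff, Matrix.star_eq_conjTranspose,
      Matrix.fromBlocks_conjTranspose, Matrix.fromBlocks_multiply]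
    simp only [Matrix.conjTranspose_zero, Matrix.mul_zero, Matrix.zero_mul, add_zero, zero_add,
      hA', hmap]
    exact Matrix.fromBlocks_one
  · rw [Matrix.det_fromBlocks_zero₂₁,
      show (A.map (starRingEnd ℂ)).det = starRingEnd ℂ A.det from by
        rw [← RingHom.mapMatrix_apply, RingHom.map_det]]
    simpa using Unitary.mul_star_self_of_mem (Matrix.det_of_mem_unitary hA)

/-- Given a continuous family `ρ` of unitary `k × k` matrices parametrized by a topological
space `X`, the continuous map `X → SU(2k)`, `a ↦ diag(ρ a, conj (ρ a))`. -/
noncomputable def blockDiagConjMap {X : Type} [TopologicalSpace X] {k : ℕ}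
    (ρ : X → Matrix.unitaryGroup (Fin k) ℂ) (hρ : Continuous ρ) :
    C(X, Matrix.specialUnitaryGroup (Fin k ⊕ Fin k) ℂ) where
  toFun a := ⟨Matrix.fromBlocks (ρ a : Matrix (Fin k) (Fin k) ℂ) 0 0
      ((ρ a : Matrix (Fin k) (Fin k) ℂ).map (starRingEnd ℂ)),
    fromBlocks_conj_mem_specialUnitaryGroup _ (ρ a).2⟩
  continuous_toFun := by
    have hcoe : Continuous fun a : X => (ρ a : Matrix (Fin k) (Fin k) ℂ) :=
      continuous_subtype_val.comp hρ
    exact Continuous.subtype_mk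
      (Continuous.matrix_fromBlocks hcoe continuous_const continuous_const
        (hcoe.matrix_map continuous_star)) _


lemma iSup_subtype_ne_bot {α : Type*} [CompleteLattice α] {ι : Type*} (V : ι → α) :
    ⨆ χ : {χ : ι // V χ ≠ ⊥}, V χ.1 = ⨆ χ, V χ := by
  refine le_antisymm (iSup_le fun χ => le_iSup V χ.1) (iSup_le fun χ => ?_)
  by_cases h : V χ = ⊥
  · simp [h]
  · exact le_iSup_of_le ⟨χ, h⟩ le_rfl

variable {k : ℕ} {X : Type} [CommGroup X]

lemma exists_unitary_conj_diagonal (ρ : X →* Matrix.unitaryGroup (Fin k) ℂ) :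
    ∃ W ∈ Matrix.unitaryGroup (Fin k) ℂ, ∀ a : X, ∃ dv : Fin k → ℂ,
      star W * ((ρ a : Matrix (Fin k) (Fin k) ℂ) * W) = Matrix.diagonal dv := by
  classical
  set M : X → Matrix (Fin k) (Fin k) ℂ := fun a => (ρ a : Matrix (Fin k) (Fin k) ℂ) with hM
  have hcomm : ∀ a b : X, M a * M b = M b * M a := by
    intro a b
    have h : ρ a * ρ b = ρ b * ρ a := by rw [← _root_.map_mul, ← _root_.map_mul, mul_comm]
    simpa [hM] using congrArg (Subtype.val) h
  have hmulone : ∀ a : X, M a * M a⁻¹ = 1 := by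
    intro a
    have h : ρ a * ρ a⁻¹ = 1 := by rw [← _root_.map_mul, mul_inv_cancel, _root_.map_one]
    simpa [hM] using congrArg (Subtype.val) h
  have hstar : ∀ a : X, star (M a) = M a⁻¹ := by
    intro a
    calc star (M a) = star (M a) * (M a * M a⁻¹) := by rw [hmulone, mul_one]
    _ = (star (M a) * M a) * M a⁻¹ := by rw [mul_assoc]
    _ = M a⁻¹ := by rw [Unitary.star_mul_self_of_mem (ρ a).2, one_mul]
  -- the commuting family of Hermitian matrices
  set Hm : X × Bool → Matrix (Fin k) (Fin k) ℂ := fun p =>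
    if p.2 then M p.1 + star (M p.1) else Complex.I • (star (M p.1) - M p.1) with hHm
  have hHerm : ∀ p, (Hm p).IsHermitian := by
    intro p
    rcases p with ⟨a, _ | _⟩ <;>
      simp [hHm, Matrix.IsHermitian, Matrix.conjTranspose_add, Matrix.conjTranspose_sub,
        Matrix.conjTranspose_smul, ← Matrix.star_eq_conjTranspose, Complex.star_def,
        Complex.conj_I, neg_smul, smul_neg, smul_sub, neg_sub, add_comm, sub_eq_neg_add]
  have hC : ∀ a b : X, Commute (M a) (M b) := hcomm
  have hCH : ∀ (p) (b : X), Commute (Hm p) (M b) := by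
    intro p b
    rcases p with ⟨a, _ | _⟩ <;>
      simp only [hHm, if_true, if_false, hstar, Bool.false_eq_true, ite_true, ite_false]
    · exact ((hC _ b).sub_left (hC _ b)).smul_left _
    · exact (hC _ b).add_left (hC _ b)
  have hHcomm : ∀ p q, Commute (Hm p) (Hm q) := by
    intro p q
    rcases q with ⟨b, _ | _⟩
    · have h1 : Hm (b, false) = Complex.I • (M b⁻¹ - M b) := by simp [hHm, hstar]
      rw [h1]; exact ((hCH p b⁻¹).sub_right (hCH p b)).smul_right _
    · have h2 : Hm (b, true) = M b + M b⁻¹ := by simp [hHm, hstar]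
      rw [h2]; exact (hCH p b).add_right (hCH p b⁻¹)
  -- pass to symmetric endomorphisms of Euclidean space
  set T : X × Bool → (EuclideanSpace ℂ (Fin k) →ₗ[ℂ] EuclideanSpace ℂ (Fin k)) :=
    fun p => Matrix.toEuclideanLin (Hm p) with hT
  have key : ∀ A B : Matrix (Fin k) (Fin k) ℂ, A * B = B * A →
      Commute (Matrix.toEuclideanLin A) (Matrix.toEuclideanLin B) := by
    intro A B h
    have h2 := congrArg Matrix.toEuclideanLin h
    rw [Matrix.toEuclideanLin_eq_toLin,
      Matrix.toLin_mul _ (PiLp.basisFun 2 ℂ (Fin k)) _,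
      Matrix.toLin_mul _ (PiLp.basisFun 2 ℂ (Fin k)) _] at h2
    exact h2
  have hSym : ∀ p, (T p).IsSymmetric := fun p => Matrix.isHermitian_iff_isSymmetric.mp (hHerm p)
  have hPair : Pairwise (Function.onFun Commute T) := fun p q _ => key _ _ (hHcomm p q)
  set V : ((X × Bool) → ℂ) → Submodule ℂ (EuclideanSpace ℂ (Fin k)) :=
    fun χ => ⨅ p, Module.End.eigenspace (T p) (χ p) with hV
  have hOrth := LinearMap.IsSymmetric.orthogonalFamily_iInf_eigenspaces hSym
  have hTop : ⨆ χ, V χ = ⊤ := LinearMap.IsSymmetric.iSup_iInf_eq_top_of_commute hSym hPair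
  have hfin : {χ : (X × Bool) → ℂ | V χ ≠ ⊥}.Finite :=
    WellFoundedGT.finite_ne_bot_of_iSupIndep hOrth.independent
  haveI : Fintype {χ : (X × Bool) → ℂ // V χ ≠ ⊥} := hfin.fintype
  have hOrth' := hOrth.comp (Subtype.coe_injective (p := fun χ : (X × Bool) → ℂ => V χ ≠ ⊥))
  have hTop' : ⨆ χ : {χ : (X × Bool) → ℂ // V χ ≠ ⊥}, V χ.1 = ⊤ :=
    (iSup_subtype_ne_bot V).trans hTop
  have hInternal : DirectSum.IsInternal (fun χ : {χ : (X × Bool) → ℂ // V χ ≠ ⊥} => V χ.1) :=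
    hOrth'.isInternal_iff.mpr (by rw [hTop', Submodule.top_orthogonal_eq_bot])
  have hn : Module.finrank ℂ (EuclideanSpace ℂ (Fin k)) = k := by
    simp [finrank_euclideanSpace]
  set b := hInternal.subordinateOrthonormalBasis hn hOrth' with hbdef
  have hbmem : ∀ j : Fin k, ∃ χ : (X × Bool) → ℂ, b j ∈ V χ := fun j =>
    ⟨_, hInternal.subordinateOrthonormalBasis_subordinate hn j hOrth'⟩
  -- eigenvector equations for all the matrices `M a`
  have heig : ∀ j : Fin k, ∃ μ : X → ℂ, ∀ a : X, M a *ᵥ ⇑(b j) = μ a • ⇑(b j) := by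
    intro j
    obtain ⟨χ, hχ⟩ := hbmem j
    rw [hV] at hχ
    refine ⟨fun a => (χ (a, true) + Complex.I * χ (a, false)) / 2, fun a => ?_⟩
    have key2 : ∀ (N : Matrix (Fin k) (Fin k) ℂ) (c : ℂ),
        Matrix.toEuclideanLin N (b j) = c • (b j) → N *ᵥ ⇑(b j) = c • ⇑(b j) := by
      intro N c h
      simpa only [Matrix.toEuclideanLin_apply, WithLp.ofLp_smul] using congr(⇑$(h))
    have h1 : (M a + star (M a)) *ᵥ ⇑(b j) = χ (a, true) • ⇑(b j) := by
      refine key2 _ _ ?_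
      have := Module.End.mem_eigenspace_iff.mp ((Submodule.mem_iInf _).mp hχ (a, true))
      simpa [hT, hHm] using this
    have h2 : (Complex.I • (star (M a) - M a)) *ᵥ ⇑(b j) = χ (a, false) • ⇑(b j) := by
      refine key2 _ _ ?_
      have := Module.End.mem_eigenspace_iff.mp ((Submodule.mem_iInf _).mp hχ (a, false))
      simpa [hT, hHm] using this
    -- solve for `M a *ᵥ b j`
    set u := M a *ᵥ ⇑(b j) with hu
    set w := star (M a) *ᵥ ⇑(b j) with hw
    have h1' : u + w = χ (a, true) • ⇑(b j) := by
      rw [hu, hw, ← Matrix.add_mulVec]; exact h1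
    have h2'' : Complex.I • (w - u) = χ (a, false) • ⇑(b j) := by
      rw [hu, hw, ← Matrix.sub_mulVec, ← Matrix.smul_mulVec]; exact h2
    have h2' : w - u = (- Complex.I * χ (a, false)) • ⇑(b j) := by
      have h3 := congrArg (fun z => (- Complex.I) • z) h2''
      simp only [smul_smul] at h3
      rw [neg_mul, Complex.I_mul_I, neg_neg, one_smul] at h3
      rw [h3, neg_mul]
    have h4 : u + u = (χ (a, true) + Complex.I * χ (a, false)) • ⇑(b j) := by
      have h5 := congrArg₂ (fun z z' => z - z') h1' h2'
      simp only at h5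
      have e1 : u + w - (w - u) = u + u := by abel
      rw [e1] at h5
      rw [h5, ← sub_smul]
      ring_nf
    have : (2 : ℂ) • u = (χ (a, true) + Complex.I * χ (a, false)) • ⇑(b j) := by
      rw [two_smul]; exact h4
    calc u = (2 : ℂ)⁻¹ • ((2 : ℂ) • u) := by rw [smul_smul]; norm_num
    _ = ((χ (a, true) + Complex.I * χ (a, false)) / 2) • ⇑(b j) := by
        rw [this, smul_smul]; ring_nf
  choose μ hμ using heig
  set W : Matrix (Fin k) (Fin k) ℂ :=
    (EuclideanSpace.basisFun (Fin k) ℂ).toBasis.toMatrix b.toBasis with hWdef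
  have hWmem : W ∈ Matrix.unitaryGroup (Fin k) ℂ :=
    (EuclideanSpace.basisFun (Fin k) ℂ).toMatrix_orthonormalBasis_mem_unitary b
  refine ⟨W, hWmem, fun a => ⟨fun j => μ j a, ?_⟩⟩
  have hWvec : ∀ j, W *ᵥ Pi.single j 1 = ⇑(b j) := by
    intro j
    funext i
    simp only [Matrix.mulVec_single, mul_one, MulOpposite.op_one, one_smul]
    rfl
  have hstarWvec : ∀ j, star W *ᵥ ⇑(b j) = Pi.single j 1 := by
    intro j
    rw [← hWvec, Matrix.mulVec_mulVec, Matrix.mem_unitaryGroup_iff'.mp hWmem, Matrix.one_mulVec]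
  apply Matrix.toEuclideanLin.injective
  apply Module.Basis.ext (EuclideanSpace.basisFun (Fin k) ℂ).toBasis
  intro i
  simp only [Matrix.toEuclideanLin_apply, OrthonormalBasis.coe_toBasis,
    EuclideanSpace.basisFun_apply, PiLp.ofLp_single, ← Matrix.mulVec_mulVec,
    hWvec, hμ, Matrix.diagonal_mulVec_single, Matrix.mulVec_smul, hstarWvec,
    WithLp.ofLp_smul, PiLp.toLp_single, mul_one]
  rw [(hμ i a : (ρ a : Matrix (Fin k) (Fin k) ℂ) *ᵥ ⇑(b i) = _), Matrix.mulVec_smul, hstarWvec]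
  apply PiLp.ext
  intro j
  simp [EuclideanSpace.single_apply, PiLp.smul_apply, mul_ite, Pi.single_apply]


lemma conj_map_mem_unitaryGroup {m : Type*} [Fintype m] [DecidableEq m]
    {A : Matrix m m ℂ} (hA : A ∈ Matrix.unitaryGroup m ℂ) :
    A.map (starRingEnd ℂ) ∈ Matrix.unitaryGroup m ℂ := by
  rw [Matrix.mem_unitaryGroup_iff] at hA ⊢
  rw [Matrix.star_eq_conjTranspose] at hA
  have hmapH : (A.map (starRingEnd ℂ))ᴴ = Aᵀ := by
    ext i j; simp [Matrix.conjTranspose_apply, Matrix.map_apply]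
  rw [Matrix.star_eq_conjTranspose, hmapH]
  have h1 : (A * Aᴴ).map (starRingEnd ℂ) = 1 := by
    rw [hA, Matrix.map_one _ (map_zero _) (map_one _)]
  rw [Matrix.map_mul] at h1
  have h3 : Aᴴ.map (starRingEnd ℂ) = Aᵀ := by
    ext i j; simp [Matrix.conjTranspose_apply, Matrix.map_apply]
  rwa [h3] at h1

lemma fromBlocks_mem_unitaryGroup {m : Type*} [Fintype m] [DecidableEq m]
    {A B : Matrix m m ℂ} (hA : A ∈ Matrix.unitaryGroup m ℂ)
    (hB : B ∈ Matrix.unitaryGroup m ℂ) :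
    Matrix.fromBlocks A 0 0 B ∈ Matrix.unitaryGroup (m ⊕ m) ℂ := by
  have hA' := Matrix.mem_unitaryGroup_iff.mp hA
  have hB' := Matrix.mem_unitaryGroup_iff.mp hB
  rw [Matrix.star_eq_conjTranspose] at hA' hB'
  rw [Matrix.mem_unitaryGroup_iff, Matrix.star_eq_conjTranspose,
    Matrix.fromBlocks_conjTranspose, Matrix.fromBlocks_multiply]
  simp only [Matrix.conjTranspose_zero, Matrix.mul_zero, Matrix.zero_mul, add_zero, zero_add,
    hA', hB']
  exact Matrix.fromBlocks_one

lemma rot_mem_unitaryGroup {m : Type*} [Fintype m] [DecidableEq m] (x y : ℝ)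
    (h : x ^ 2 + y ^ 2 = 1) :
    Matrix.fromBlocks ((x : ℂ) • 1) (-(y : ℂ) • 1) ((y : ℂ) • 1) ((x : ℂ) • 1)
      ∈ Matrix.unitaryGroup (m ⊕ m) ℂ := by
  have hc : (x : ℂ) * x + (y : ℂ) * y = 1 := by
    have h2 := congrArg (fun t : ℝ => (t : ℂ)) h
    push_cast at h2
    linear_combination h2
  rw [Matrix.mem_unitaryGroup_iff, Matrix.star_eq_conjTranspose,
    Matrix.fromBlocks_conjTranspose, Matrix.fromBlocks_multiply]
  simp only [Matrix.conjTranspose_smul, Matrix.conjTranspose_one, Matrix.conjTranspose_neg,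
    RCLike.star_def, Complex.conj_ofReal, smul_mul_smul_comm, one_mul, neg_smul, neg_neg,
    Matrix.neg_mul, Matrix.mul_neg, smul_neg]
  have e1 : ((x:ℂ) * x) • (1 : Matrix m m ℂ) + ((y:ℂ) * y) • 1 = 1 := by
    rw [← add_smul, hc, one_smul]
  have e2 : ((x:ℂ) * y) • (1 : Matrix m m ℂ) + -(((y:ℂ) * x) • 1) = 0 := by
    rw [show ((y:ℂ) * x) = (x:ℂ) * y by ring, add_neg_cancel]
  have e3 : ((y:ℂ) * x) • (1 : Matrix m m ℂ) + -(((x:ℂ) * y) • 1) = 0 := by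
    rw [show ((x:ℂ) * y) = (y:ℂ) * x by ring, add_neg_cancel]
  have e4 : ((y:ℂ) * y) • (1 : Matrix m m ℂ) + ((x:ℂ) * x) • 1 = 1 := by
    rw [← add_smul, show (y:ℂ) * y + (x:ℂ) * x = 1 by linear_combination hc, one_smul]
  rw [e1, e2, e3, e4]
  exact Matrix.fromBlocks_one

/-- For every `n ≥ 1`, `k ≥ 1` and every continuous group homomorphism
`ρ : 𝕋ⁿ → U(k)` of the `n`-torus into the `k × k` unitary group, the continuous map
`𝕋ⁿ → SU(2k)` given by `a ↦ diag(ρ(a), conj ρ(a))` is null-homotopic, i.e. homotopic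
through continuous maps to the constant map with value the `2k × 2k` identity matrix. -/
theorem stmt_0 (n k : ℕ) (hn : 1 ≤ n) (hk : 1 ≤ k)
    (ρ : (Fin n → Circle) →* Matrix.unitaryGroup (Fin k) ℂ)
    (hρ : Continuous ρ) :
    (blockDiagConjMap (fun a => ρ a) hρ).Homotopic
      (ContinuousMap.const (Fin n → Circle) 1) := by
  classical
  obtain ⟨W, hW, hdiag⟩ := exists_unitary_conj_diagonal ρ
  choose dv hdv using hdiag
  set Dg : (Fin n → Circle) → Matrix (Fin k) (Fin k) ℂ :=
    fun a => star W * ((ρ a : Matrix (Fin k) (Fin k) ℂ) * W) with hDg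
  have hDgd : ∀ a, Dg a = Matrix.diagonal (dv a) := fun a => hdv a
  have hDgmem : ∀ a, Dg a ∈ Matrix.unitaryGroup (Fin k) ℂ := fun a =>
    mul_mem (Unitary.star_mem hW) (mul_mem (ρ a).2 hW)
  have hDgstar : ∀ a, (Dg a).map (starRingEnd ℂ) = star (Dg a) := by
    intro a
    rw [hDgd a, Matrix.star_eq_conjTranspose, Matrix.diagonal_conjTranspose,
      Matrix.diagonal_map (map_zero _)]
    rfl
  have hDD : ∀ a, Dg a * (Dg a).map (starRingEnd ℂ) = 1 := by
    intro a; rw [hDgstar a]; exact Matrix.mem_unitaryGroup_iff.mp (hDgmem a)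
  -- the pieces of the homotopy
  set cc : unitInterval → ℝ := fun t => Real.cos (Real.pi / 2 * (1 - (t : ℝ))) with hcc
  set ss : unitInterval → ℝ := fun t => Real.sin (Real.pi / 2 * (1 - (t : ℝ))) with hss
  set R : unitInterval → Matrix (Fin k ⊕ Fin k) (Fin k ⊕ Fin k) ℂ := fun t =>
    Matrix.fromBlocks ((cc t : ℂ) • 1) (-(ss t : ℂ) • 1) ((ss t : ℂ) • 1) ((cc t : ℂ) • 1) with hR
  have hRmem : ∀ t, R t ∈ Matrix.unitaryGroup (Fin k ⊕ Fin k) ℂ := fun t =>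
    rot_mem_unitaryGroup _ _ (Real.cos_sq_add_sin_sq _)
  set Vb : Matrix (Fin k ⊕ Fin k) (Fin k ⊕ Fin k) ℂ :=
    Matrix.fromBlocks W 0 0 (W.map (starRingEnd ℂ)) with hVb
  have hVbmem : Vb ∈ Matrix.unitaryGroup (Fin k ⊕ Fin k) ℂ :=
    fromBlocks_mem_unitaryGroup hW (conj_map_mem_unitaryGroup hW)
  set P : (Fin n → Circle) → Matrix (Fin k ⊕ Fin k) (Fin k ⊕ Fin k) ℂ :=
    fun a => Matrix.fromBlocks (Dg a) 0 0 1 with hP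
  set Q : (Fin n → Circle) → Matrix (Fin k ⊕ Fin k) (Fin k ⊕ Fin k) ℂ :=
    fun a => Matrix.fromBlocks ((Dg a).map (starRingEnd ℂ)) 0 0 1 with hQ
  have hPmem : ∀ a, P a ∈ Matrix.unitaryGroup (Fin k ⊕ Fin k) ℂ := fun a =>
    fromBlocks_mem_unitaryGroup (hDgmem a) (one_mem _)
  have hQmem : ∀ a, Q a ∈ Matrix.unitaryGroup (Fin k ⊕ Fin k) ℂ := fun a =>
    fromBlocks_mem_unitaryGroup (conj_map_mem_unitaryGroup (hDgmem a)) (one_mem _)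
  have hPQ : ∀ a, P a * Q a = 1 := by
    intro a
    rw [hP, hQ]
    simp only [Matrix.fromBlocks_multiply, Matrix.mul_zero, Matrix.zero_mul, add_zero, zero_add,
      Matrix.mul_one, Matrix.one_mul, hDD]
    exact Matrix.fromBlocks_one
  set F : unitInterval × (Fin n → Circle) → Matrix (Fin k ⊕ Fin k) (Fin k ⊕ Fin k) ℂ :=
    fun p => Vb * (P p.2 * R p.1 * (Q p.2 * (R p.1)ᴴ)) * Vbᴴ with hF
  have hFmem : ∀ p, F p ∈ Matrix.specialUnitaryGroup (Fin k ⊕ Fin k) ℂ := by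
    intro p
    rw [Matrix.mem_specialUnitaryGroup_iff]
    constructor
    · refine mul_mem (mul_mem hVbmem (mul_mem (mul_mem (hPmem p.2) (hRmem p.1))
        (mul_mem (hQmem p.2) ?_))) ?_
      · rw [← Matrix.star_eq_conjTranspose]; exact Unitary.star_mem (hRmem p.1)
      · rw [← Matrix.star_eq_conjTranspose]; exact Unitary.star_mem hVbmem
    · have e1 : (P p.2).det * (Q p.2).det = 1 := by
        rw [← Matrix.det_mul, hPQ, Matrix.det_one]
      have e2 : (R p.1).det * ((R p.1)ᴴ).det = 1 := by
        rw [← Matrix.det_mul, ← Matrix.star_eq_conjTranspose,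
          Matrix.mem_unitaryGroup_iff.mp (hRmem p.1), Matrix.det_one]
      have e3 : Vb.det * (Vbᴴ).det = 1 := by
        rw [← Matrix.det_mul, ← Matrix.star_eq_conjTranspose,
          Matrix.mem_unitaryGroup_iff.mp hVbmem, Matrix.det_one]
      have hd : (F p).det = Vb.det * ((P p.2).det * (R p.1).det *
          ((Q p.2).det * ((R p.1)ᴴ).det)) * (Vbᴴ).det := by
        simp only [hF, Matrix.det_mul]
      rw [hd, show Vb.det * ((P p.2).det * (R p.1).det * ((Q p.2).det * ((R p.1)ᴴ).det)) *
          (Vbᴴ).det = (Vb.det * (Vbᴴ).det) * (((P p.2).det * (Q p.2).det) *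
          ((R p.1).det * ((R p.1)ᴴ).det)) by ring, e1, e2, e3]
      norm_num
  -- continuity
  have hcoe : Continuous fun a : Fin n → Circle => (ρ a : Matrix (Fin k) (Fin k) ℂ) :=
    continuous_subtype_val.comp hρ
  have hDgcont : Continuous Dg :=
    continuous_const.matrix_mul (hcoe.matrix_mul continuous_const)
  have hccont : Continuous cc :=
    Real.continuous_cos.comp (continuous_const.mul (continuous_const.sub continuous_subtype_val))
  have hscont : Continuous ss :=
    Real.continuous_sin.comp (continuous_const.mul (continuous_const.sub continuous_subtype_val))
  have hRcont : Continuous R := by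
    refine Continuous.matrix_fromBlocks ?_ ?_ ?_ ?_
    · exact ((Complex.continuous_ofReal.comp hccont).smul continuous_const)
    · exact (((Complex.continuous_ofReal.comp hscont).neg).smul continuous_const)
    · exact ((Complex.continuous_ofReal.comp hscont).smul continuous_const)
    · exact ((Complex.continuous_ofReal.comp hccont).smul continuous_const)
  have hFcont : Continuous F := by
    have hPc : Continuous fun p : unitInterval × (Fin n → Circle) => P p.2 :=
      Continuous.matrix_fromBlocks (hDgcont.comp continuous_snd) continuous_const
        continuous_const continuous_const
    have hQc : Continuous fun p : unitInterval × (Fin n → Circle) => Q p.2 :=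
      Continuous.matrix_fromBlocks ((hDgcont.comp continuous_snd).matrix_map continuous_star)
        continuous_const continuous_const continuous_const
    have hRc : Continuous fun p : unitInterval × (Fin n → Circle) => R p.1 :=
      hRcont.comp continuous_fst
    exact (continuous_const.matrix_mul ((hPc.matrix_mul hRc).matrix_mul
      (hQc.matrix_mul hRc.matrix_conjTranspose))).matrix_mul continuous_const
  -- endpoint t = 0
  have hWsW : W * star W = 1 := Matrix.mem_unitaryGroup_iff.mp hW
  have hWDW : ∀ a, W * (Dg a * star W) = (ρ a : Matrix (Fin k) (Fin k) ℂ) := by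
    intro a
    rw [hDg]
    simp only [← Matrix.mul_assoc]
    rw [hWsW, Matrix.one_mul, Matrix.mul_assoc, hWsW, Matrix.mul_one]
  have hconjT : ∀ (A : Matrix (Fin k) (Fin k) ℂ),
      (A.map (starRingEnd ℂ))ᴴ = (Aᴴ).map (starRingEnd ℂ) := by
    intro A; ext i j; simp [Matrix.conjTranspose_apply, Matrix.map_apply]
  have hR0 : R 0 = Matrix.fromBlocks 0 (-1) 1 0 := by
    have h0 : ((0 : unitInterval) : ℝ) = 0 := rfl
    have hc0 : cc 0 = 0 := by rw [hcc]; simp [h0, Real.cos_pi_div_two]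
    have hs0 : ss 0 = 1 := by rw [hss]; simp [h0, Real.sin_pi_div_two]
    simp only [hR]
    rw [hc0, hs0]
    norm_num
  have hR1 : R 1 = 1 := by
    have h1 : ((1 : unitInterval) : ℝ) = 1 := rfl
    have hc1 : cc 1 = 1 := by rw [hcc]; simp [h1, Real.cos_zero]
    have hs1 : ss 1 = 0 := by rw [hss]; simp [h1, Real.sin_zero]
    simp only [hR]
    rw [hc1, hs1]
    norm_num
  have hF0 : ∀ a, F (0, a) = Matrix.fromBlocks (ρ a : Matrix (Fin k) (Fin k) ℂ) 0 0
      ((ρ a : Matrix (Fin k) (Fin k) ℂ).map (starRingEnd ℂ)) := by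
    intro a
    have hmid : P a * R 0 * (Q a * (R 0)ᴴ) =
        Matrix.fromBlocks (Dg a) 0 0 ((Dg a).map (starRingEnd ℂ)) := by
      rw [hR0, hP, hQ]
      simp only [Matrix.fromBlocks_conjTranspose, Matrix.conjTranspose_zero,
        Matrix.conjTranspose_one, Matrix.conjTranspose_neg, Matrix.fromBlocks_multiply,
        Matrix.mul_zero, Matrix.zero_mul, add_zero, zero_add, Matrix.mul_one, Matrix.one_mul,
        Matrix.mul_neg, Matrix.neg_mul, neg_neg, Matrix.zero_mul, neg_zero]
    show Vb * (P a * R 0 * (Q a * (R 0)ᴴ)) * Vbᴴ = _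
    rw [hmid, hVb, Matrix.fromBlocks_conjTranspose]
    simp only [Matrix.conjTranspose_zero, Matrix.fromBlocks_multiply, Matrix.mul_zero,
      Matrix.zero_mul, add_zero, zero_add]
    have hTL : W * Dg a * Wᴴ = (ρ a : Matrix (Fin k) (Fin k) ℂ) := by
      rw [Matrix.mul_assoc, ← Matrix.star_eq_conjTranspose]; exact hWDW a
    have hBR : W.map (starRingEnd ℂ) * (Dg a).map (starRingEnd ℂ) * (W.map (starRingEnd ℂ))ᴴ
        = ((ρ a : Matrix (Fin k) (Fin k) ℂ)).map (starRingEnd ℂ) := by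
      rw [Matrix.mul_assoc, hconjT, ← Matrix.map_mul, ← Matrix.map_mul,
        ← Matrix.star_eq_conjTranspose, hWDW a]
    rw [hTL, hBR]
  have hF1 : ∀ a, F (1, a) = 1 := by
    intro a
    show Vb * (P a * R 1 * (Q a * (R 1)ᴴ)) * Vbᴴ = 1
    rw [hR1, Matrix.conjTranspose_one, Matrix.mul_one, Matrix.mul_one, hPQ a, Matrix.mul_one,
      ← Matrix.star_eq_conjTranspose]
    exact Matrix.mem_unitaryGroup_iff.mp hVbmem
  exact ⟨{ toFun := fun p => ⟨F p, hFmem p⟩,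
           continuous_toFun := hFcont.subtype_mk _,
           map_zero_left := fun a => Subtype.ext (hF0 a),
           map_one_left := fun a => Subtype.ext (hF1 a) }⟩
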